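/- Fix i ∈ {1,…,m} and ε > 0, and let V_i(θ) = ∑_{j=1}^m θ_j G(a_j)²/S³ + G(a_i)²/(θ_i S) − 2·G(a_i)²/S² − D_i(θ)² (the variance of the single-sample REINFORCE random variable R_i). Then for every positive integer N with N ≤ V_i(θ)/(D_i(θ)² + ε) there exists a temperature τ̃ > 0 such that the mean squared error of the N-sample Smoothed-Autodiff estimator with temperature τ̃, namely (E_Z[∂_{θ_i} G(h_{τ̃}(Z,θ))] − D_i(θ))² + (1/N)·Var_Z(∂_{θ_i} G(h_{τ̃}(Z,θ))), is at most D_i(θ)² + ε, which in turn is at most the mean squared error V_i(θ)/N of the N-sample REINFORCE estimator. -/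

import Mathlib

open Real Finset Filter MeasureTheory

/-- `S = ∑_j θ_j`. -/
noncomputable def Stot {m : ℕ} (θ : Fin m → ℝ) : ℝ := ∑ j, θ j

/-- The Gumbel(0,1) measure on ℝ, with Lebesgue density `exp(−x − exp(−x))`. -/
noncomputable def gumbel : Measure ℝ :=
  volume.withDensity fun x => ENNReal.ofReal (Real.exp (-x - Real.exp (-x)))

/-- The law of `Z = (Z_1,…,Z_m)` with i.i.d. Gumbel(0,1) coordinates. -/
noncomputable def gumbelPi (m : ℕ) : Measure (Fin m → ℝ) :=
  Measure.pi fun _ => gumbel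

/-- Softmax weight `w_i^τ(z,θ) = exp((log θ_i + z_i)/τ) / ∑_j exp((log θ_j + z_j)/τ)`. -/
noncomputable def softW {m : ℕ} (τ : ℝ) (θ z : Fin m → ℝ) (i : Fin m) : ℝ :=
  Real.exp ((Real.log (θ i) + z i) / τ) / ∑ j, Real.exp ((Real.log (θ j) + z j) / τ)

/-- Smoothed action `h_τ(z,θ) = ∑_i a_i · w_i^τ(z,θ)`. -/
noncomputable def hTau {m : ℕ} (τ : ℝ) (a θ z : Fin m → ℝ) : ℝ :=
  ∑ i, a i * softW τ θ z i

/-- Single-sample Smoothed-Autodiff gradient `∂_{θ_i} G(h_τ(z,θ))`. -/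
noncomputable def saGrad {m : ℕ} (τ : ℝ) (a : Fin m → ℝ) (G : ℝ → ℝ)
    (θ : Fin m → ℝ) (i : Fin m) (z : Fin m → ℝ) : ℝ :=
  deriv (fun t : ℝ => G (hTau τ a (Function.update θ i t) z)) (θ i)

/-- `Var_Z(∂_{θ_i} G(h_τ(Z,θ)))` for `Z` with i.i.d. Gumbel(0,1) coordinates. -/
noncomputable def saVar {m : ℕ} (τ : ℝ) (a : Fin m → ℝ) (G : ℝ → ℝ)
    (θ : Fin m → ℝ) (i : Fin m) : ℝ :=
  (∫ z, (saGrad τ a G θ i z) ^ 2 ∂(gumbelPi m)) -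
    (∫ z, saGrad τ a G θ i z ∂(gumbelPi m)) ^ 2

/-- `V_i(θ) = ∑_j θ_j G(a_j)²/S³ + G(a_i)²/(θ_i S) − 2·G(a_i)²/S² − D_i(θ)²`, the variance
of the single-sample REINFORCE random variable `R_i`, as a function of `D_i(θ)`. -/
noncomputable def Vrf {m : ℕ} (a : Fin m → ℝ) (G : ℝ → ℝ) (θ : Fin m → ℝ)
    (i : Fin m) (Di : ℝ) : ℝ :=
  (∑ j, θ j * G (a j) ^ 2 / (Stot θ) ^ 3) + G (a i) ^ 2 / (θ i * Stot θ)
    - 2 * G (a i) ^ 2 / (Stot θ) ^ 2 - Di ^ 2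

section Aux
variable {m : ℕ}

lemma den_pos [Nonempty (Fin m)] (τ : ℝ) (θ z : Fin m → ℝ) :
    0 < ∑ j, Real.exp ((Real.log (θ j) + z j) / τ) :=
  Finset.sum_pos (fun j _ => Real.exp_pos _) Finset.univ_nonempty

lemma softW_nonneg (τ : ℝ) (θ z : Fin m → ℝ) (i : Fin m) [Nonempty (Fin m)] :
    0 ≤ Real.exp ((Real.log (θ i) + z i) / τ) /
      ∑ j, Real.exp ((Real.log (θ j) + z j) / τ) :=
  div_nonneg (Real.exp_pos _).le (den_pos τ θ z).le

lemma softW_le_one (τ : ℝ) (θ z : Fin m → ℝ) (i : Fin m) [Nonempty (Fin m)] :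
    Real.exp ((Real.log (θ i) + z i) / τ) /
      (∑ j, Real.exp ((Real.log (θ j) + z j) / τ)) ≤ 1 := by
  rw [div_le_one (den_pos τ θ z)]
  exact Finset.single_le_sum (f := fun j => Real.exp ((Real.log (θ j) + z j) / τ)) (fun j _ => (Real.exp_pos _).le) (Finset.mem_univ i)

lemma sum_softW [Nonempty (Fin m)] (τ : ℝ) (θ z : Fin m → ℝ) :
    ∑ j, (Real.exp ((Real.log (θ j) + z j) / τ) /
      ∑ k, Real.exp ((Real.log (θ k) + z k) / τ)) = 1 := by
  rw [← Finset.sum_div, div_self (den_pos τ θ z).ne']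

lemma hTau_mem [Nonempty (Fin m)] (τ : ℝ) (a θ z : Fin m → ℝ) :
    hTau τ a θ z ∈ convexHull ℝ (Set.range a) := by
  have h := Finset.univ.centerMass_mem_convexHull (w := softW τ θ z) (z := a)
    (fun j _ => softW_nonneg τ θ z j)
    (by rw [show ∑ j, softW τ θ z j = 1 from sum_softW τ θ z]; exact one_pos)
    (fun j _ => Set.mem_range_self j)
  have he : Finset.univ.centerMass (softW τ θ z) a = hTau τ a θ z := by
    rw [Finset.centerMass, show ∑ j, softW τ θ z j = 1 from sum_softW τ θ z, inv_one, one_smul,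
      hTau]
    exact Finset.sum_congr rfl fun j _ => by rw [smul_eq_mul, mul_comm]
  rwa [he] at h

lemma abs_hTau_le [Nonempty (Fin m)] (τ : ℝ) (a θ z : Fin m → ℝ) :
    |hTau τ a θ z| ≤ ∑ j, |a j| := by
  refine (Finset.abs_sum_le_sum_abs _ _).trans (Finset.sum_le_sum fun j _ => ?_)
  rw [abs_mul]
  calc |a j| * |softW τ θ z j| ≤ |a j| * 1 := by
        refine mul_le_mul_of_nonneg_left ?_ (abs_nonneg _)
        simp only [softW]
        rw [abs_of_nonneg (softW_nonneg τ θ z j)]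
        exact softW_le_one τ θ z j
    _ = |a j| := mul_one _

lemma hTau_div [Nonempty (Fin m)] (τ : ℝ) (a θ z : Fin m → ℝ) :
    hTau τ a θ z = (∑ j, a j * Real.exp ((Real.log (θ j) + z j) / τ)) /
      ∑ j, Real.exp ((Real.log (θ j) + z j) / τ) := by
  rw [hTau, Finset.sum_div]
  exact Finset.sum_congr rfl fun j _ => by rw [softW, mul_div_assoc]

lemma hasDerivAt_saGrad [Nonempty (Fin m)] {τ : ℝ} (hτ : 0 < τ)
    (a : Fin m → ℝ) {G : ℝ → ℝ} (hG : Differentiable ℝ G)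
    {θ : Fin m → ℝ} (hθ : ∀ j, 0 < θ j) (i : Fin m) (z : Fin m → ℝ) :
    HasDerivAt (fun t : ℝ => G (hTau τ a (Function.update θ i t) z))
      (deriv G (hTau τ a θ z) *
        (softW τ θ z i * (a i - hTau τ a θ z) / (τ * θ i))) (θ i) := by
  set D : ℝ := ∑ j, Real.exp ((Real.log (θ j) + z j) / τ) with hDdef
  have hDpos : 0 < D := den_pos τ θ z
  set Nm : ℝ := ∑ j, a j * Real.exp ((Real.log (θ j) + z j) / τ) with hNdef
  set u' : ℝ := Real.exp ((Real.log (θ i) + z i) / τ) * ((θ i)⁻¹ / τ) with hu'def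
  have hterm : ∀ j, HasDerivAt
      (fun t : ℝ => Real.exp ((Real.log (Function.update θ i t j) + z j) / τ))
      (if j = i then u' else 0) (θ i) := by
    intro j
    by_cases hj : j = i
    · subst hj
      simp only [Function.update_self, if_pos rfl]
      exact (((Real.hasDerivAt_log (hθ j).ne').add_const (z j)).div_const τ).exp
    · simp only [Function.update_of_ne hj, if_neg hj]
      exact hasDerivAt_const _ _
  have hden : HasDerivAt
      (fun t : ℝ => ∑ j, Real.exp ((Real.log (Function.update θ i t j) + z j) / τ))
      u' (θ i) := by
    have h := HasDerivAt.fun_sum (fun j (_ : j ∈ Finset.univ) => hterm j)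
    simpa using h
  have hnum : HasDerivAt
      (fun t : ℝ => ∑ j, a j * Real.exp ((Real.log (Function.update θ i t j) + z j) / τ))
      (a i * u') (θ i) := by
    have h := HasDerivAt.fun_sum (fun j (_ : j ∈ Finset.univ) => (hterm j).const_mul (a j))
    simpa [mul_ite, mul_zero] using h
  have hDne : (fun t : ℝ => ∑ j, Real.exp ((Real.log (Function.update θ i t j) + z j) / τ))
      (θ i) ≠ 0 := by
    simp only [Function.update_eq_self]
    exact hDpos.ne'
  have hdiv := hnum.fun_div hden hDne
  have hgd := (hG ((fun t : ℝ =>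
      (∑ j, a j * Real.exp ((Real.log (Function.update θ i t j) + z j) / τ)) /
      ∑ j, Real.exp ((Real.log (Function.update θ i t j) + z j) / τ)) (θ i))).hasDerivAt
  have hcomp := hgd.comp (θ i) hdiv
  have hfun : (fun t : ℝ => G (hTau τ a (Function.update θ i t) z)) =
      (G ∘ fun t : ℝ =>
        (∑ j, a j * Real.exp ((Real.log (Function.update θ i t j) + z j) / τ)) /
        ∑ j, Real.exp ((Real.log (Function.update θ i t j) + z j) / τ)) := by
    funext t
    simp only [Function.comp_apply]
    rw [hTau_div]
  rw [hfun]
  convert hcomp using 1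
  · rfl
  · rfl
  have hupd : ∀ j, Function.update θ i (θ i) j = θ j := fun j => by
    rw [Function.update_eq_self]
  simp only [Function.update_eq_self]
  rw [hTau_div, softW]
  rw [← hDdef, ← hNdef]
  rw [hu'def]
  clear_value D Nm u'
  generalize Real.exp ((Real.log (θ i) + z i) / τ) = Ei
  congr 1
  have hc : D ^ 2 * D⁻¹ ^ 2 = 1 := by
    rw [← mul_pow, mul_inv_cancel₀ hDpos.ne', one_pow]
  field_simp

lemma gumbel_density_integrable :
    Integrable (fun x : ℝ => Real.exp (-x - Real.exp (-x))) := by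
  have hcont : Continuous fun x : ℝ => Real.exp (-x - Real.exp (-x)) := by
    fun_prop
  rw [← integrableOn_univ, ← Set.Iic_union_Ioi (a := (0 : ℝ)), integrableOn_union]
  constructor
  · refine (integrableOn_exp_Iic 0).mono' hcont.aestronglyMeasurable.restrict ?_
    refine (ae_restrict_iff' measurableSet_Iic).2 (ae_of_all _ fun x hx => ?_)
    rw [Real.norm_eq_abs, abs_of_pos (Real.exp_pos _)]
    apply Real.exp_le_exp.2
    have h1 : 1 + -x / 2 ≤ Real.exp (-x / 2) := by
      have := Real.add_one_le_exp (-x / 2); linarith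
    have h2 : Real.exp (-x) = Real.exp (-x / 2) ^ 2 := by
      rw [sq, ← Real.exp_add]; ring_nf
    have hx0 : x ≤ 0 := hx
    have hsq : (1 + -x / 2) ^ 2 ≤ Real.exp (-x / 2) ^ 2 :=
      pow_le_pow_left₀ (by linarith) h1 2
    nlinarith [sq_nonneg (1 + x / 2)]
  · refine ((exp_neg_integrableOn_Ioi 0 one_pos)).mono' hcont.aestronglyMeasurable.restrict ?_
    refine (ae_restrict_iff' measurableSet_Ioi).2 (ae_of_all _ fun x _ => ?_)
    rw [Real.norm_eq_abs, abs_of_pos (Real.exp_pos _)]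
    apply Real.exp_le_exp.2
    have := Real.exp_pos (-x)
    nlinarith

instance : IsFiniteMeasure gumbel :=
  isFiniteMeasure_withDensity_ofReal gumbel_density_integrable.2

end Aux

set_option maxHeartbeats 2000000 in
/-- If `N ≤ V_i(θ)/(D_i(θ)² + ε)`, then there is a temperature `τ̃ > 0` at which the MSE of
the `N`-sample Smoothed-Autodiff estimator is at most `D_i(θ)² + ε`, which in turn is at
most the MSE `V_i(θ)/N` of the `N`-sample REINFORCE estimator. Here
`D_i(θ) = ∂_{θ_i} E_θ[G]`. -/
theorem smoothed_autodiff_beats_reinforce_general {m : ℕ} (hm : 2 ≤ m)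
    (a : Fin m → ℝ) (G : ℝ → ℝ) (hG : Differentiable ℝ G) (Gbar : ℝ)
    (hG' : ∀ x ∈ convexHull ℝ (Set.range a), |deriv G x| ≤ Gbar)
    (θ : Fin m → ℝ) (hθ : ∀ j, 0 < θ j) (i : Fin m) (ε : ℝ) (hε : 0 < ε) (Di : ℝ)
    (hD : HasDerivAt
      (fun t : ℝ => ∑ j, Function.update θ i t j * G (a j) / ∑ k, Function.update θ i t k)
      Di (θ i))
    (N : ℕ) (hN : 0 < N) (hNle : (N : ℝ) ≤ Vrf a G θ i Di / (Di ^ 2 + ε)) :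
    ∃ τ : ℝ, 0 < τ ∧
      ((∫ z, saGrad τ a G θ i z ∂(gumbelPi m)) - Di) ^ 2
          + (1 / (N : ℝ)) * saVar τ a G θ i ≤ Di ^ 2 + ε ∧
      Di ^ 2 + ε ≤ Vrf a G θ i Di / N := by
  haveI : Nonempty (Fin m) := ⟨⟨0, by omega⟩⟩
  haveI : IsFiniteMeasure (gumbelPi m) := by
    constructor
    rw [gumbelPi, Measure.pi_univ]
    exact ENNReal.prod_lt_top fun j _ => measure_lt_top gumbel _
  set A : ℝ := ∑ j, |a j| with hAdef
  have hA : 0 ≤ A := Finset.sum_nonneg fun j _ => abs_nonneg _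
  have hGbar : 0 ≤ Gbar :=
    le_trans (abs_nonneg _) (hG' (a ⟨0, by omega⟩) (subset_convexHull ℝ _ (Set.mem_range_self _)))
  set Cb : ℝ := Gbar * (2 * A) / θ i with hCbdef
  have hCb : 0 ≤ Cb := div_nonneg (by positivity) (hθ i).le
  set M : ℝ := (gumbelPi m Set.univ).toReal with hMdef
  have hM : 0 ≤ M := ENNReal.toReal_nonneg
  set B : ℝ := (Cb * M) ^ 2 + 2 * |Di| * (Cb * M) + Cb ^ 2 * M with hBdef
  have hB : 0 ≤ B := by positivity
  set τ : ℝ := max 1 ((B + 1) / ε) with hτdef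
  have hτ1 : 1 ≤ τ := le_max_left _ _
  have hτpos : 0 < τ := lt_of_lt_of_le one_pos hτ1
  have hτB : B / τ ≤ ε := by
    have h : (B + 1) / ε ≤ τ := le_max_right _ _
    rw [div_le_iff₀ hε] at h
    rw [div_le_iff₀ hτpos]
    nlinarith
  have hfe : ∀ z, saGrad τ a G θ i z =
      deriv G (hTau τ a θ z) * (softW τ θ z i * (a i - hTau τ a θ z) / (τ * θ i)) :=
    fun z => (hasDerivAt_saGrad hτpos a hG hθ i z).deriv
  have hai : |a i| ≤ A :=
    Finset.single_le_sum (f := fun j => |a j|) (fun j _ => abs_nonneg _) (Finset.mem_univ i)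
  have hbd : ∀ z, |saGrad τ a G θ i z| ≤ Cb / τ := by
    intro z
    rw [hfe z, abs_mul]
    have h1 : |deriv G (hTau τ a θ z)| ≤ Gbar := hG' _ (hTau_mem τ a θ z)
    have h2 : |softW τ θ z i * (a i - hTau τ a θ z) / (τ * θ i)| ≤ 2 * A / (τ * θ i) := by
      rw [abs_div, abs_mul, abs_of_pos (mul_pos hτpos (hθ i))]
      apply div_le_div_of_nonneg_right ?_ (mul_pos hτpos (hθ i)).le
      have hw0 : 0 ≤ softW τ θ z i := by
        simp only [softW]; exact softW_nonneg τ θ z i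
      have hw1 : |softW τ θ z i| ≤ 1 := by
        rw [abs_of_nonneg hw0]; simp only [softW]; exact softW_le_one τ θ z i
      have hh : |hTau τ a θ z| ≤ A := abs_hTau_le τ a θ z
      have hsub : |a i - hTau τ a θ z| ≤ 2 * A := by
        calc |a i - hTau τ a θ z| ≤ |a i| + |hTau τ a θ z| := abs_sub _ _
          _ ≤ 2 * A := by linarith
      calc |softW τ θ z i| * |a i - hTau τ a θ z| ≤ 1 * (2 * A) :=
            mul_le_mul hw1 hsub (abs_nonneg _) one_pos.le
        _ = 2 * A := one_mul _
    calc |deriv G (hTau τ a θ z)| * |softW τ θ z i * (a i - hTau τ a θ z) / (τ * θ i)|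
        ≤ Gbar * (2 * A / (τ * θ i)) := mul_le_mul h1 h2 (abs_nonneg _) hGbar
      _ = Cb / τ := by
          rw [hCbdef]
          field_simp
  have hdc : Continuous fun z : Fin m → ℝ => ∑ k, Real.exp ((Real.log (θ k) + z k) / τ) :=
    continuous_finset_sum _ fun k _ =>
      Continuous.rexp (by fun_prop)
  have hwc : ∀ j, Continuous fun z : Fin m → ℝ => softW τ θ z j := by
    intro j
    simp only [softW]
    exact (Continuous.rexp (by fun_prop)).div hdc
      fun z => (den_pos τ θ z).ne'
  have hHc : Continuous fun z : Fin m → ℝ => hTau τ a θ z := by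
    simp only [hTau]
    exact continuous_finset_sum _ fun j _ => continuous_const.mul (hwc j)
  have hmeas : Measurable (saGrad τ a G θ i) := by
    have heq : saGrad τ a G θ i = fun z =>
        deriv G (hTau τ a θ z) * (softW τ θ z i * (a i - hTau τ a θ z) / (τ * θ i)) :=
      funext hfe
    rw [heq]
    exact ((measurable_deriv G).comp hHc.measurable).mul
      (((hwc i).measurable.mul ((continuous_const.sub hHc).measurable)).div_const _)
  have hint2 : Integrable (fun z => (saGrad τ a G θ i z) ^ 2) (gumbelPi m) := by
    refine (integrable_const ((Cb / τ) ^ 2)).mono'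
      (hmeas.pow_const 2).aestronglyMeasurable (ae_of_all _ fun z => ?_)
    rw [Real.norm_eq_abs, abs_of_nonneg (sq_nonneg _), ← sq_abs]
    exact pow_le_pow_left₀ (abs_nonneg _) (hbd z) 2
  set I1 : ℝ := ∫ z, saGrad τ a G θ i z ∂(gumbelPi m) with hI1
  set I2 : ℝ := ∫ z, (saGrad τ a G θ i z) ^ 2 ∂(gumbelPi m) with hI2
  have hsv : saVar τ a G θ i = I2 - I1 ^ 2 := by
    rw [saVar, ← hI1, ← hI2]
  have hb1 : |I1| ≤ Cb / τ * M := by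
    rw [hI1, ← Real.norm_eq_abs]
    exact norm_integral_le_of_norm_le_const
      (ae_of_all _ fun z => by rw [Real.norm_eq_abs]; exact hbd z)
  have hb2 : I2 ≤ M * (Cb / τ) ^ 2 := by
    rw [hI2]
    calc (∫ z, (saGrad τ a G θ i z) ^ 2 ∂(gumbelPi m))
        ≤ ∫ _, (Cb / τ) ^ 2 ∂(gumbelPi m) := by
          refine integral_mono hint2 (integrable_const _) fun z => ?_
          rw [← sq_abs]
          exact pow_le_pow_left₀ (abs_nonneg _) (hbd z) 2
      _ = M * (Cb / τ) ^ 2 := by rw [integral_const, smul_eq_mul]; rfl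
  have hI2n : 0 ≤ I2 := by
    rw [hI2]; exact integral_nonneg fun z => sq_nonneg _
  clear_value A Cb M B τ I1 I2
  have hN1 : 1 / (N : ℝ) ≤ 1 := by
    rw [div_le_one (by exact_mod_cast hN : (0 : ℝ) < N)]
    exact_mod_cast hN
  have hN0 : 0 ≤ 1 / (N : ℝ) := by positivity
  have habs : |Di * I1| ≤ |Di| * (Cb / τ * M) := by
    rw [abs_mul]; exact mul_le_mul_of_nonneg_left hb1 (abs_nonneg Di)
  have hsum : (Cb / τ * M) ^ 2 + 2 * (|Di| * (Cb / τ * M)) + M * (Cb / τ) ^ 2 ≤ B / τ := by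
    have h1 : (Cb / τ * M) ^ 2 = (Cb * M) ^ 2 / τ ^ 2 := by ring
    have h2 : M * (Cb / τ) ^ 2 = Cb ^ 2 * M / τ ^ 2 := by ring
    have e3 : 2 * (|Di| * (Cb / τ * M)) = 2 * |Di| * (Cb * M) / τ := by ring
    have hBt : B / τ = (Cb * M) ^ 2 / τ + 2 * |Di| * (Cb * M) / τ + Cb ^ 2 * M / τ := by
      rw [hBdef]; ring
    have hq : ∀ c : ℝ, 0 ≤ c → c / τ ^ 2 ≤ c / τ := by
      intro c hc
      rw [div_le_div_iff₀ (pow_pos hτpos 2) hτpos]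
      nlinarith [mul_le_mul_of_nonneg_left hτ1 (mul_nonneg hc hτpos.le)]
    rw [h1, h2, e3, hBt]
    have := hq ((Cb * M) ^ 2) (by positivity)
    have := hq (Cb ^ 2 * M) (mul_nonneg (sq_nonneg Cb) hM)
    linarith
  have hmain : (I1 - Di) ^ 2 ≤ Di ^ 2 + 2 * (|Di| * (Cb / τ * M)) + (Cb / τ * M) ^ 2 := by
    nlinarith [mul_self_le_mul_self (abs_nonneg I1) hb1, sq_abs I1, neg_abs_le (Di * I1), habs]
  have hvar : 1 / (N : ℝ) * (I2 - I1 ^ 2) ≤ M * (Cb / τ) ^ 2 := by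
    nlinarith [mul_nonneg hN0 (sq_nonneg I1), mul_le_of_le_one_left hI2n hN1]
  refine ⟨τ, hτpos, ?_, ?_⟩
  · rw [hsv, ← hI1]
    have : (I1 - Di) ^ 2 + 1 / (N : ℝ) * (I2 - I1 ^ 2) ≤ Di ^ 2 + B / τ := by linarith
    linarith
  · have hpos : 0 < Di ^ 2 + ε := by positivity
    have h := (le_div_iff₀ hpos).1 hNle
    rw [le_div_iff₀ (by exact_mod_cast hN : (0 : ℝ) < N)]
    nlinarith
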